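/- Let $n \ge 2$ be an even integer. Then the polynomial $g(x) = x^{n+1} - 2x^n + 1$ has exactly one real root $\omega$ in the interval $(-1, 0)$, and this root satisfies $-1 < \omega < -3^{-1/n}$. -/
import Mathlib

/-- For even `n ≥ 2`, the polynomial `g(x) = x^(n+1) - 2x^n + 1` has exactly one real root `ω`
in `(-1, 0)`, and this root satisfies `-1 < ω < -3^(-1/n)`. -/
theorem unique_negative_root (n : ℕ) (hn : 2 ≤ n) (heven : Even n) :
    (∃! ω : ℝ, ω ∈ Set.Ioo (-1 : ℝ) 0 ∧ ω ^ (n + 1) - 2 * ω ^ n + 1 = 0) ∧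
      ∀ ω : ℝ, ω ∈ Set.Ioo (-1 : ℝ) 0 → ω ^ (n + 1) - 2 * ω ^ n + 1 = 0 →
        -1 < ω ∧ ω < -(3 : ℝ) ^ (-(1 : ℝ) / n) := by
  have hnne : n ≠ 0 := by omega
  have hnR : (0:ℝ) < (n:ℝ) := by exact_mod_cast Nat.pos_of_ne_zero hnne
  -- key: any root in Ioo satisfies ω^n * (2 - ω) = 1 and ω^n > 1/3
  have key : ∀ ω : ℝ, ω ∈ Set.Ioo (-1 : ℝ) 0 → ω ^ (n + 1) - 2 * ω ^ n + 1 = 0 →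
      ω ^ n * (2 - ω) = 1 ∧ 1/3 < ω ^ n := by
    intro ω hω hroot
    obtain ⟨h1, h0⟩ := hω
    have hs : ω ^ (n+1) = ω ^ n * ω := pow_succ ω n
    have heq : ω ^ n * (2 - ω) = 1 := by nlinarith [hs]
    have hpos : 0 < ω ^ n := heven.pow_pos (ne_of_lt h0)
    constructor
    · exact heq
    · nlinarith
  -- powers and monotonicity for uniqueness
  have uniq : ∀ a b : ℝ, a ∈ Set.Ioo (-1 : ℝ) 0 → b ∈ Set.Ioo (-1 : ℝ) 0 →
      a ^ n * (2 - a) = 1 → b ^ n * (2 - b) = 1 → a = b := by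
    intro a b ha hb hea heb
    by_contra hne
    wlog hab : a < b generalizing a b
    · exact this b a hb ha heb hea (Ne.symm hne) (lt_of_le_of_ne (not_lt.mp hab) (Ne.symm hne))
    have hb0 : b < 0 := hb.2
    have hbn : (-b) < (-a) := by linarith
    have hposb : (0:ℝ) < -b := by linarith
    have hpl : (-b) ^ n < (-a) ^ n := pow_lt_pow_left₀ hbn (le_of_lt hposb) hnne
    rw [heven.neg_pow, heven.neg_pow] at hpl
    have hbp : 0 < b ^ n := heven.pow_pos (ne_of_lt hb0)
    nlinarith
  -- the constant c = 3^(-1/n)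
  set c : ℝ := (3:ℝ) ^ (-(1:ℝ)/n) with hc
  have hc0 : 0 < c := Real.rpow_pos_of_pos (by norm_num) _
  have hc1 : c < 1 := by
    apply Real.rpow_lt_one_of_one_lt_of_neg (by norm_num)
    have : -(1:ℝ)/n < 0 := by
      apply div_neg_of_neg_of_pos <;> [norm_num; exact hnR]
    exact this
  have hcn : c ^ n = 1/3 := by
    rw [hc, ← Real.rpow_natCast ((3:ℝ) ^ (-(1:ℝ)/n)) n, ← Real.rpow_mul (by norm_num)]
    rw [div_mul_cancel₀ _ (ne_of_gt hnR)]
    rw [Real.rpow_neg_one]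
    norm_num
  -- bound for any root
  have bound : ∀ ω : ℝ, ω ∈ Set.Ioo (-1 : ℝ) 0 → ω ^ (n + 1) - 2 * ω ^ n + 1 = 0 →
      -1 < ω ∧ ω < -c := by
    intro ω hω hroot
    obtain ⟨-, hgt⟩ := key ω hω hroot
    refine ⟨hω.1, ?_⟩
    by_contra hle
    push_neg at hle
    have h1 : -ω ≤ c := by linarith
    have h2 : (-ω) ^ n ≤ c ^ n := pow_le_pow_left₀ (by linarith [hω.2]) h1 n
    rw [heven.neg_pow, hcn] at h2
    linarith
  -- existence via IVT
  have hcont : ContinuousOn (fun x : ℝ => x ^ (n + 1) - 2 * x ^ n + 1) (Set.Icc (-1 : ℝ) 0) :=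
    (((continuous_pow (n+1)).sub (continuous_const.mul (continuous_pow n))).add continuous_const).continuousOn
  have hex : ∃ ω ∈ Set.Ioo (-1 : ℝ) 0, ω ^ (n + 1) - 2 * ω ^ n + 1 = 0 := by
    have hmem : (0:ℝ) ∈ Set.Ioo ((-1:ℝ) ^ (n + 1) - 2 * (-1:ℝ) ^ n + 1)
        ((0:ℝ) ^ (n + 1) - 2 * (0:ℝ) ^ n + 1) := by
      rw [heven.neg_one_pow, (heven.add_one).neg_one_pow, zero_pow (by omega),
        zero_pow hnne]
      norm_num
    have := intermediate_value_Ioo (by norm_num : (-1:ℝ) ≤ 0) hcont hmem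
    obtain ⟨ω, hω, hval⟩ := this
    exact ⟨ω, hω, hval⟩
  obtain ⟨ω, hω, hval⟩ := hex
  refine ⟨⟨ω, ⟨hω, hval⟩, ?_⟩, bound⟩
  rintro y ⟨hy, hyval⟩
  exact uniq y ω hy hω (key y hy hyval).1 (key ω hω hval).1
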